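/- arXiv:1209.0166 — 8 statements merged into one kernel-verified Lean document; each statement's English description precedes it below -/
import Mathlib

section
/- Let X be a Hausdorff topological space and F a decomposition of X (a partition into nonempty sets). If F is pointwise almost periodic (i.e., the collection of closures of elements of F is again a decomposition of X) and the decomposition of closures is upper semicontinuous, then F is R-closed, i.e., the set R = {(x,y) ∈ X × X : y ∈ closure of the element of F containing x} is closed in X × X. -/
open Set Topology

/-- `F` is a decomposition of `X`: a family of pairwise disjoint nonempty
subsets whose union is `X`. -/
def IsDecomposition {X : Type*} (F : Set (Set X)) : Prop :=
  (∀ A ∈ F, A.Nonempty) ∧ (∀ A ∈ F, ∀ B ∈ F, A ≠ B → Disjoint A B) ∧ ⋃₀ F = Set.univ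

/-- `F` is R-closed: `{(x,y) : y ∈ closure (F(x))}` is closed. -/
def RClosed {X : Type*} [TopologicalSpace X] (F : Set (Set X)) : Prop :=
  IsClosed {p : X × X | ∃ A ∈ F, p.1 ∈ A ∧ p.2 ∈ closure A}

/-- `F` is pointwise almost periodic: the closures of elements of `F` again
form a decomposition, i.e. closures of distinct elements are equal or disjoint. -/
def PtwiseAP {X : Type*} [TopologicalSpace X] (F : Set (Set X)) : Prop :=
  ∀ A ∈ F, ∀ B ∈ F, closure A = closure B ∨ Disjoint (closure A) (closure B)

/-- `V` is saturated for the decomposition of closures `F̂`. -/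
def SaturatedHat {X : Type*} [TopologicalSpace X] (F : Set (Set X)) (V : Set X) : Prop :=
  ∀ A ∈ F, ¬ Disjoint (closure A) V → closure A ⊆ V

/-- The decomposition of closures `F̂` is upper semicontinuous: elements are
compact (and closed), and every open neighbourhood of an element contains a
saturated neighbourhood of that element. -/
def USCHat {X : Type*} [TopologicalSpace X] (F : Set (Set X)) : Prop :=
  (∀ A ∈ F, IsCompact (closure A)) ∧
  ∀ A ∈ F, ∀ U : Set X, IsOpen U → closure A ⊆ U →
    ∃ V : Set X, SaturatedHat F V ∧ closure A ⊆ interior V ∧ V ⊆ U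

theorem stmt0 {X : Type*} [TopologicalSpace X] [T2Space X] (F : Set (Set X))
    (hF : IsDecomposition F) (hap : PtwiseAP F) (husc : USCHat F) :
    RClosed F := by
  rw [RClosed, ← isOpen_compl_iff]
  rw [isOpen_iff_forall_mem_open]
  rintro ⟨x, y⟩ hxy
  simp only [mem_compl_iff, mem_setOf_eq, not_exists] at hxy
  -- find A containing x
  obtain ⟨A, hA, hxA⟩ : ∃ A ∈ F, x ∈ A := by
    have := hF.2.2
    have hx : x ∈ ⋃₀ F := this ▸ mem_univ x
    simpa using hx
  have hy : y ∉ closure A := fun h => hxy A ⟨hA, hxA, h⟩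
  obtain ⟨U, W, hU, hW, hAU, hyW, hUW⟩ :=
    (husc.1 A hA).separation_of_notMem hy
  obtain ⟨V, hVsat, hVA, hVU⟩ := husc.2 A hA U hU hAU
  refine ⟨interior V ×ˢ W, ?_, (isOpen_interior.prod hW), ⟨hVA (subset_closure hxA), hyW⟩⟩
  rintro ⟨a, b⟩ ⟨ha, hb⟩ ⟨B, hB, haB, hbB⟩
  have hBV : closure B ⊆ V := hVsat B hB (fun hd =>
    hd.ne_of_mem (subset_closure haB) (interior_subset ha) rfl)
  exact (hUW.ne_of_mem (hVU (hBV hbB)) hb) rfl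
end

section
/- Let X be a compact metrizable space and F a decomposition of X. If F is R-closed, then F is pointwise almost periodic and the decomposition of closures {closure(L) : L ∈ F} is upper semicontinuous. -/
open Set Topology

/-- Key lemma: if `y ∈ closure A` and `y ∈ B`, then `closure A ⊆ closure B`. -/
lemma key_sub {X : Type*} [TopologicalSpace X]
    (F : Set (Set X)) (hF : IsDecomposition F) (hR : RClosed F)
    {A B : Set X} (hA : A ∈ F) (hB : B ∈ F) {y : X}
    (hyA : y ∈ closure A) (hyB : y ∈ B) : closure A ⊆ closure B := by
  apply closure_minimal _ isClosed_closure
  intro x hx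
  have hmem : (y, x) ∈ {p : X × X | ∃ A ∈ F, p.1 ∈ A ∧ p.2 ∈ closure A} := by
    have hsub : A ×ˢ ({x} : Set X) ⊆ {p : X × X | ∃ A ∈ F, p.1 ∈ A ∧ p.2 ∈ closure A} := by
      rintro ⟨a, z⟩ ⟨ha, hz⟩
      rw [Set.mem_singleton_iff] at hz
      subst hz
      exact ⟨A, hA, ha, subset_closure hx⟩
    have hcl : (y, x) ∈ closure (A ×ˢ ({x} : Set X)) := by
      rw [closure_prod_eq]
      exact ⟨hyA, subset_closure rfl⟩
    have := closure_mono hsub hcl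
    rwa [hR.closure_eq] at this
  obtain ⟨C, hC, hyC, hxC⟩ := hmem
  have hCB : C = B := by
    by_contra hne
    exact (hF.2.1 C hC B hB hne).ne_of_mem hyC hyB rfl
  rwa [hCB] at hxC

/-- If `y ∈ closure A` and `y ∈ B` then the closures are equal. -/
lemma key_eq {X : Type*} [TopologicalSpace X]
    (F : Set (Set X)) (hF : IsDecomposition F) (hR : RClosed F)
    {A B : Set X} (hA : A ∈ F) (hB : B ∈ F) {y : X}
    (hyA : y ∈ closure A) (hyB : y ∈ B) : closure A = closure B := by
  have h1 := key_sub F hF hR hA hB hyA hyB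
  obtain ⟨a, ha⟩ := hF.1 A hA
  have h2 := key_sub F hF hR hB hA (h1 (subset_closure ha)) ha
  exact le_antisymm h1 h2

theorem stmt1 {X : Type*} [TopologicalSpace X] [TopologicalSpace.MetrizableSpace X] [CompactSpace X]
    (F : Set (Set X)) (hF : IsDecomposition F) (hR : RClosed F) :
    PtwiseAP F ∧ USCHat F := by
  have hap : PtwiseAP F := by
    intro A hA B hB
    by_cases hd : Disjoint (closure A) (closure B)
    · exact Or.inr hd
    left
    obtain ⟨z, hzA, hzB⟩ := Set.not_disjoint_iff.mp hd
    have hz : z ∈ ⋃₀ F := hF.2.2 ▸ Set.mem_univ z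
    obtain ⟨C, hC, hzC⟩ := hz
    rw [key_eq F hF hR hA hC hzA hzC, key_eq F hF hR hB hC hzB hzC]
  refine ⟨hap, fun A hA => isClosed_closure.isCompact, ?_⟩
  intro A hA U hU hAU
  set V : Set X := {x | ∀ B ∈ F, x ∈ closure B → closure B ⊆ U} with hV
  have hVU : V ⊆ U := by
    intro x hx
    obtain ⟨B, hB, hxB⟩ : x ∈ ⋃₀ F := hF.2.2 ▸ Set.mem_univ x
    exact hx B hB (subset_closure hxB) (subset_closure hxB)
  have hAV : closure A ⊆ V := by
    intro x hx B hB hxB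
    obtain ⟨C, hC, hxC⟩ : x ∈ ⋃₀ F := hF.2.2 ▸ Set.mem_univ x
    rw [key_eq F hF hR hB hC hxB hxC, ← key_eq F hF hR hA hC hx hxC]
    exact hAU
  have hVopen : IsOpen V := by
    rw [← isClosed_compl_iff]
    have hKeq : Vᶜ = Prod.fst '' ({p : X × X | ∃ A ∈ F, p.1 ∈ A ∧ p.2 ∈ closure A} ∩
        (Set.univ ×ˢ Uᶜ)) := by
      ext x
      simp only [hV, Set.mem_compl_iff, Set.mem_setOf_eq, Set.mem_image, Set.mem_inter_iff,
        Set.mem_prod, Set.mem_univ, true_and, not_forall]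
      constructor
      · rintro ⟨B, hB, hxB, hnsub⟩
        obtain ⟨z, hzB, hzU⟩ := Set.not_subset.mp hnsub
        obtain ⟨C, hC, hxC⟩ : x ∈ ⋃₀ F := hF.2.2 ▸ Set.mem_univ x
        have : closure B = closure C := key_eq F hF hR hB hC hxB hxC
        exact ⟨(x, z), ⟨⟨C, hC, hxC, this ▸ hzB⟩, hzU⟩, rfl⟩
      · rintro ⟨⟨x', z⟩, ⟨⟨C, hC, hxC, hzC⟩, hzU⟩, rfl⟩
        exact ⟨C, hC, subset_closure hxC, fun hsub => hzU (hsub hzC)⟩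
    rw [hKeq]
    have hKcl : IsClosed ({p : X × X | ∃ A ∈ F, p.1 ∈ A ∧ p.2 ∈ closure A} ∩
        (Set.univ ×ˢ Uᶜ)) := hR.inter (isClosed_univ.prod hU.isClosed_compl)
    exact (hKcl.isCompact.image continuous_fst).isClosed
  refine ⟨V, ?_, by rw [hVopen.interior_eq]; exact hAV, hVU⟩
  intro B hB hnd
  obtain ⟨z, hzB, hzV⟩ := Set.not_disjoint_iff.mp hnd
  have hBU : closure B ⊆ U := hzV B hB hzB
  intro w hw C hC hwC
  rcases hap C hC B hB with h | h
  · rwa [h]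
  · exact absurd (h.ne_of_mem hwC hw rfl) (fun _ => by trivial)
end

section
/- Let F be a pointwise almost periodic decomposition of a compact metrizable space X, and let F̂ denote the decomposition of closures. Then the following are equivalent: (1) F is R-closed; (2) F̂ is upper semicontinuous; (3) the quotient space X/F̂ is Hausdorff. -/
open Set Topology

section Aux

variable {X : Type*} [TopologicalSpace X]

/-- The relation `r` is reflexive. -/
lemma aux_refl (F : Set (Set X)) (hF : IsDecomposition F) (x : X) :
    ∃ A ∈ F, x ∈ closure A ∧ x ∈ closure A := by
  have hx : x ∈ ⋃₀ F := hF.2.2.symm ▸ Set.mem_univ x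
  obtain ⟨A, hA, hxA⟩ := hx
  exact ⟨A, hA, subset_closure hxA, subset_closure hxA⟩

/-- The relation `r` is an equivalence relation. -/
lemma aux_equiv (F : Set (Set X)) (hF : IsDecomposition F) (hap : PtwiseAP F) :
    Equivalence (fun x y : X => ∃ A ∈ F, x ∈ closure A ∧ y ∈ closure A) := by
  constructor
  · exact fun x => aux_refl F hF x
  · rintro x y ⟨A, hA, hx, hy⟩; exact ⟨A, hA, hy, hx⟩
  · rintro x y z ⟨A, hA, hx, hy⟩ ⟨B, hB, hy', hz⟩
    rcases hap A hA B hB with h | h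
    · exact ⟨A, hA, hx, h ▸ hz⟩
    · exact absurd hy' (Set.disjoint_left.mp h hy)

/-- The R-closed set coincides with the graph of the relation `r`. -/
lemma aux_S_eq_E (F : Set (Set X)) (hF : IsDecomposition F) (hap : PtwiseAP F) :
    {p : X × X | ∃ A ∈ F, p.1 ∈ A ∧ p.2 ∈ closure A} =
      {p : X × X | ∃ A ∈ F, p.1 ∈ closure A ∧ p.2 ∈ closure A} := by
  ext ⟨x, y⟩
  constructor
  · rintro ⟨A, hA, hx, hy⟩; exact ⟨A, hA, subset_closure hx, hy⟩
  · rintro ⟨A, hA, hx, hy⟩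
    have hxu : x ∈ ⋃₀ F := hF.2.2.symm ▸ Set.mem_univ x
    obtain ⟨B, hB, hxB⟩ := hxu
    rcases hap A hA B hB with h | h
    · exact ⟨B, hB, hxB, h ▸ hy⟩
    · exact absurd (subset_closure hxB) (Set.disjoint_left.mp h hx)

variable [TopologicalSpace.MetrizableSpace X] [CompactSpace X]

/-- Saturation of a closed set is closed, assuming the graph of `r` is closed. -/
lemma aux_sat_closed (F : Set (Set X))
    (hE : IsClosed {p : X × X | ∃ A ∈ F, p.1 ∈ closure A ∧ p.2 ∈ closure A})
    {C : Set X} (hC : IsClosed C) :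
    IsClosed {x : X | ∃ c ∈ C, ∃ A ∈ F, x ∈ closure A ∧ c ∈ closure A} := by
  have : {x : X | ∃ c ∈ C, ∃ A ∈ F, x ∈ closure A ∧ c ∈ closure A} =
      Prod.fst '' ({p : X × X | ∃ A ∈ F, p.1 ∈ closure A ∧ p.2 ∈ closure A} ∩
        Set.univ ×ˢ C) := by
    ext x
    constructor
    · rintro ⟨c, hc, A, hA, hx, hcA⟩
      exact ⟨(x, c), ⟨⟨A, hA, hx, hcA⟩, ⟨Set.mem_univ _, hc⟩⟩, rfl⟩
    · rintro ⟨⟨a, c⟩, ⟨⟨A, hA, hx, hcA⟩, ⟨-, hc⟩⟩, rfl⟩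
      exact ⟨c, hc, A, hA, hx, hcA⟩
  rw [this]
  exact (((hE.inter (isClosed_univ.prod hC)).isCompact).image continuous_fst).isClosed

end Aux

theorem stmt2 {X : Type*} [TopologicalSpace X] [TopologicalSpace.MetrizableSpace X] [CompactSpace X]
    (F : Set (Set X)) (hF : IsDecomposition F) (hap : PtwiseAP F) :
    List.TFAE [RClosed F, USCHat F,
      T2Space (Quot (fun x y : X => ∃ A ∈ F, x ∈ closure A ∧ y ∈ closure A))] := by
  set r : X → X → Prop := fun x y => ∃ A ∈ F, x ∈ closure A ∧ y ∈ closure A with hr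
  have hequiv : Equivalence r := aux_equiv F hF hap
  have hSE : {p : X × X | ∃ A ∈ F, p.1 ∈ A ∧ p.2 ∈ closure A} =
      {p : X × X | r p.1 p.2} := aux_S_eq_E F hF hap
  have hmk_eq : ∀ x y : X, Quot.mk r x = Quot.mk r y ↔ r x y := by
    intro x y
    rw [Quot.eq, hequiv.eqvGen_iff]
  tfae_have 1 → 2
  | hR => by
    rw [RClosed, hSE] at hR
    refine ⟨fun A _ => isClosed_closure.isCompact, ?_⟩
    intro A hA U hU hAU
    set V : Set X := {x : X | ∃ c ∈ Uᶜ, r x c}ᶜ with hV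
    have hVclosed : IsClosed {x : X | ∃ c ∈ Uᶜ, r x c} := aux_sat_closed F hR hU.isClosed_compl
    have hVopen : IsOpen V := hVclosed.isOpen_compl
    have hVU : V ⊆ U := by
      intro z hz
      by_contra hzU
      exact hz ⟨z, hzU, hequiv.refl z⟩
    have hAV : closure A ⊆ V := by
      intro w hw
      rintro ⟨c, hcU, B, hB, hwB, hcB⟩
      rcases hap A hA B hB with h | h
      · exact hcU (hAU (h ▸ hcB))
      · exact Set.disjoint_left.mp h hw hwB
    refine ⟨V, ?_, ?_, hVU⟩
    · intro B hB hdisj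
      rw [Set.not_disjoint_iff] at hdisj
      obtain ⟨z, hzB, hzV⟩ := hdisj
      intro w hwB
      rintro ⟨c, hcU, hwc⟩
      exact hzV ⟨c, hcU, hequiv.trans ⟨B, hB, hzB, hwB⟩ hwc⟩
    · rwa [hVopen.interior_eq]
  tfae_have 2 → 1
  | hUSC => by
    rw [RClosed, hSE]
    rw [← isOpen_compl_iff]
    rw [isOpen_iff_forall_mem_open]
    rintro ⟨x, y⟩ hxy
    simp only [Set.mem_compl_iff, Set.mem_setOf_eq] at hxy
    have hxu : x ∈ ⋃₀ F := hF.2.2.symm ▸ Set.mem_univ x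
    obtain ⟨A, hA, hxA⟩ := hxu
    have hyA : y ∉ closure A := fun hy => hxy ⟨A, hA, subset_closure hxA, hy⟩
    obtain ⟨U, W, hU, hW, hAU, hyW, hUW⟩ :=
      NormalSpace.normal (closure A) {y} isClosed_closure isClosed_singleton
        (Set.disjoint_singleton_right.mpr hyA)
    obtain ⟨V, hVsat, hAV, hVU⟩ := hUSC.2 A hA U hU hAU
    refine ⟨interior V ×ˢ W, ?_, (isOpen_interior.prod hW), ?_⟩
    · rintro ⟨x', y'⟩ ⟨hx', hy'⟩
      rintro ⟨B, hB, hx'B, hy'B⟩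
      have hBV : closure B ⊆ V := by
        refine hVsat B hB ?_
        rw [Set.not_disjoint_iff]
        exact ⟨x', hx'B, interior_subset hx'⟩
      exact Set.disjoint_left.mp hUW (hVU (hBV hy'B)) (hy' : y' ∈ W)
    · exact ⟨hAV (subset_closure hxA), hyW rfl⟩
  tfae_have 1 → 3
  | hR => by
    rw [RClosed, hSE] at hR
    constructor
    intro a b hab
    obtain ⟨x, rfl⟩ := Quot.exists_rep a
    obtain ⟨y, rfl⟩ := Quot.exists_rep b
    have hrxy : ¬ r x y := fun h => hab (Quot.sound h)
    -- classes
    set Kx : Set X := {z : X | ∃ c ∈ ({x} : Set X), r z c} with hKx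
    set Ky : Set X := {z : X | ∃ c ∈ ({y} : Set X), r z c} with hKy
    have hKxc : IsClosed Kx := aux_sat_closed F hR isClosed_singleton
    have hKyc : IsClosed Ky := aux_sat_closed F hR isClosed_singleton
    have hdisj : Disjoint Kx Ky := by
      rw [Set.disjoint_left]
      rintro z ⟨c, hc, hzc⟩ ⟨c', hc', hzc'⟩
      rw [Set.mem_singleton_iff] at hc hc'
      subst hc; subst hc'
      exact hrxy (hequiv.trans (hequiv.symm hzc) hzc')
    obtain ⟨U, W, hU, hW, hKU, hKW, hUW⟩ := NormalSpace.normal Kx Ky hKxc hKyc hdisj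
    set V1 : Set X := {z : X | ∃ c ∈ Uᶜ, r z c}ᶜ with hV1
    set V2 : Set X := {z : X | ∃ c ∈ Wᶜ, r z c}ᶜ with hV2
    have hV1open : IsOpen V1 := (aux_sat_closed F hR hU.isClosed_compl).isOpen_compl
    have hV2open : IsOpen V2 := (aux_sat_closed F hR hW.isClosed_compl).isOpen_compl
    have hV1sub : V1 ⊆ U := fun z hz => by
      by_contra hzU; exact hz ⟨z, hzU, hequiv.refl z⟩
    have hV2sub : V2 ⊆ W := fun z hz => by
      by_contra hzW; exact hz ⟨z, hzW, hequiv.refl z⟩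
    have hV1sat : ∀ z w : X, r z w → z ∈ V1 → w ∈ V1 := by
      rintro z w hzw hz ⟨c, hcU, hwc⟩
      exact hz ⟨c, hcU, hequiv.trans hzw hwc⟩
    have hV2sat : ∀ z w : X, r z w → z ∈ V2 → w ∈ V2 := by
      rintro z w hzw hz ⟨c, hcW, hwc⟩
      exact hz ⟨c, hcW, hequiv.trans hzw hwc⟩
    refine ⟨Quot.mk r '' V1, Quot.mk r '' V2, ?_, ?_, ?_, ?_, ?_⟩
    · rw [isOpen_coinduced]
      have : Quot.mk r ⁻¹' (Quot.mk r '' V1) = V1 := by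
        ext z
        constructor
        · rintro ⟨w, hw, hwz⟩
          exact hV1sat w z ((hmk_eq w z).mp hwz) hw
        · exact fun hz => ⟨z, hz, rfl⟩
      rwa [this]
    · rw [isOpen_coinduced]
      have : Quot.mk r ⁻¹' (Quot.mk r '' V2) = V2 := by
        ext z
        constructor
        · rintro ⟨w, hw, hwz⟩
          exact hV2sat w z ((hmk_eq w z).mp hwz) hw
        · exact fun hz => ⟨z, hz, rfl⟩
      rwa [this]
    · refine ⟨x, ?_, rfl⟩
      rintro ⟨c, hcU, hxc⟩
      exact hcU (hKU ⟨x, rfl, hequiv.symm hxc⟩)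
    · refine ⟨y, ?_, rfl⟩
      rintro ⟨c, hcW, hyc⟩
      exact hcW (hKW ⟨y, rfl, hequiv.symm hyc⟩)
    · rw [Set.disjoint_left]
      rintro q ⟨w1, hw1, rfl⟩ ⟨w2, hw2, heq⟩
      have hr12 : r w2 w1 := (hmk_eq w2 w1).mp heq
      have : w1 ∈ V2 := hV2sat w2 w1 hr12 hw2
      exact Set.disjoint_left.mp hUW (hV1sub hw1) (hV2sub this)
  tfae_have 3 → 1
  | hT2 => by
    rw [RClosed, hSE]
    have : {p : X × X | r p.1 p.2} =
        (fun p : X × X => (Quot.mk r p.1, Quot.mk r p.2)) ⁻¹'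
          (Set.diagonal (Quot r)) := by
      ext ⟨x, y⟩
      simp only [Set.mem_setOf_eq, Set.mem_preimage, Set.mem_diagonal_iff]
      exact (hmk_eq x y).symm
    rw [this]
    exact isClosed_diagonal.preimage
      ((continuous_quot_mk.comp continuous_fst).prodMk
        (continuous_quot_mk.comp continuous_snd))
  tfae_finish
end

section
/- Let G be a topological group acting continuously on a topological space X and H a syndetic subgroup of G, with K a compact subset of G such that K · H = G. If H is R-closed as a flow on X, then for every x ∈ X the closure of the G-orbit of x equals K · (closure of the H-orbit of x). -/
open Set MulAction Pointwise

/-- If `H` is a syndetic subgroup of `G` (witnessed by a compact `K` with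
`K · H = G`) and the `H`-action on `X` is R-closed, then
`closure (G·x) = K · closure (H·x)` for every `x`. -/
theorem stmt4 {G X : Type*} [Group G] [TopologicalSpace G] [IsTopologicalGroup G]
    [TopologicalSpace X] [MulAction G X] [ContinuousSMul G X]
    (H : Subgroup G) (K : Set G) (hK : IsCompact K)
    (hsyn : K * (H : Set G) = Set.univ)
    (hH : IsClosed {p : X × X | p.2 ∈ closure (MulAction.orbit H p.1)}) :
    ∀ x : X, closure (MulAction.orbit G x)
      = Set.image2 (fun (k : G) (y : X) => k • y) K (closure (MulAction.orbit H x)) := by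
  intro x
  have himg : Set.image2 (fun (k : G) (y : X) => k • y) K (closure (orbit H x))
      = K • closure (orbit H x) := rfl
  rw [himg]
  have hclosed : IsClosed (K • closure (orbit H x)) :=
    IsClosed.smul_left_of_isCompact isClosed_closure hK
  apply Subset.antisymm
  · -- closure (orbit G x) ⊆ K • closure (orbit H x)
    apply closure_minimal _ hclosed
    rintro y ⟨g, rfl⟩
    have : g ∈ K * (H : Set G) := by rw [hsyn]; exact mem_univ g
    obtain ⟨k, hk, h, hh, rfl⟩ := this
    refine ⟨k, hk, h • x, ?_, ?_⟩
    · exact subset_closure ⟨⟨h, hh⟩, rfl⟩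
    · simp [mul_smul]
  · rintro y ⟨k, hk, z, hz, rfl⟩
    have h1 : closure (orbit H x) ⊆ closure (orbit G x) := by
      apply closure_mono
      rintro w ⟨h, rfl⟩
      exact ⟨(h : G), rfl⟩
    have h2 : z ∈ closure (orbit G x) := h1 hz
    -- k • closure (orbit G x) ⊆ closure (orbit G x)
    have h3 : k • closure (orbit G x) ⊆ closure (orbit G x) := by
      rw [← closure_smul]
      apply closure_mono
      rintro w ⟨v, ⟨g, rfl⟩, rfl⟩
      exact ⟨k * g, mul_smul k g x⟩
    exact h3 ⟨z, h2, rfl⟩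
end

section
/- Let G be a topological group acting continuously on a topological space X and H a syndetic subgroup of G. If the action of H on X is R-closed, then so is the action of G. -/
open Set MulAction Pointwise

/-- If `H` is a syndetic subgroup of `G` and the `H`-action on `X` is R-closed,
then the `G`-action is R-closed. -/
theorem stmt5 {G X : Type*} [Group G] [TopologicalSpace G] [IsTopologicalGroup G]
    [TopologicalSpace X] [MulAction G X] [ContinuousSMul G X]
    (H : Subgroup G) (K : Set G) (hK : IsCompact K)
    (hsyn : K * (H : Set G) = Set.univ)
    (hH : IsClosed {p : X × X | p.2 ∈ closure (MulAction.orbit H p.1)}) :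
    IsClosed {p : X × X | p.2 ∈ closure (MulAction.orbit G p.1)} := by
  haveI : CompactSpace ↥K := isCompact_iff_compactSpace.mp hK
  -- Key: closure (orbit G x) = K • closure (orbit H x)
  have horb : ∀ x : X, closure (orbit G x) = K • closure (orbit H x) := by
    intro x
    apply subset_antisymm
    · apply closure_minimal _ (isClosed_closure.smul_left_of_isCompact hK)
      rintro _ ⟨g, rfl⟩
      have hg : g ∈ K * (H : Set G) := by rw [hsyn]; trivial
      obtain ⟨k, hk, h, hh, rfl⟩ := hg
      exact ⟨k, hk, (⟨h, hh⟩ : H) • x, subset_closure ⟨⟨h, hh⟩, rfl⟩, by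
        simp [mul_smul]⟩
    · rintro _ ⟨k, hk, z, hz, rfl⟩
      have h1 : closure (orbit H x) ⊆ closure (orbit G x) :=
        closure_mono (fun y hy => by
          obtain ⟨h, rfl⟩ := hy
          exact ⟨(h : G), rfl⟩)
      exact smul_closure_orbit_subset k x ⟨z, h1 hz, rfl⟩
  have heq : {p : X × X | p.2 ∈ closure (orbit G p.1)} =
      Prod.snd '' {q : ↥K × (X × X) |
        ((q.1 : G)⁻¹ • q.2.2, q.2.1).1 ∈ closure (orbit H q.2.1)} := by
    ext p
    simp only [mem_image, mem_setOf_eq]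
    constructor
    · intro hp
      rw [horb] at hp
      obtain ⟨k, hk, z, hz, hz2⟩ := hp
      refine ⟨(⟨k, hk⟩, p), ?_, rfl⟩
      simpa [← hz2, inv_smul_smul] using hz
    · rintro ⟨⟨k, q⟩, hq, rfl⟩
      simp only at hq
      rw [horb]
      exact ⟨(k : G), k.2, (k : G)⁻¹ • q.2, hq, by simp⟩
  rw [heq]
  have hf : Continuous fun q : ↥K × (X × X) => ((q.1 : G)⁻¹ • q.2.2, q.2.1) :=
    ((continuous_subtype_val.comp continuous_fst).inv.smul
      (continuous_snd.comp continuous_snd)).prodMk (continuous_fst.comp continuous_snd)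
  have hclosed : IsClosed {q : ↥K × (X × X) |
      ((q.1 : G)⁻¹ • q.2.2, q.2.1).1 ∈ closure (orbit H q.2.1)} := by
    have := hH.preimage (f := fun q : ↥K × (X × X) => (q.2.1, (q.1 : G)⁻¹ • q.2.2))
      (((continuous_fst.comp continuous_snd)).prodMk
        ((continuous_subtype_val.comp continuous_fst).inv.smul
          (continuous_snd.comp continuous_snd)))
    exact this
  exact isClosedMap_snd_of_compactSpace _ hclosed
end

section
/- Let G be a topological group acting continuously on a topological space Y such that the relation R_H = {(x,y) : y ∈ closure(H·x)} for a subgroup H is closed, and suppose K ⊆ G is compact with K·H = G and H normal in G. Then R_G = {(x,y) : y ∈ closure(G·x)} satisfies R_G = K · R_H under the G-action on Y × Y given by g·(x,y) = (x, g⁻¹·y), and hence R_G is closed. -/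
open Set MulAction Pointwise

private lemma aux_closed {G Y : Type*} [Group G] [TopologicalSpace G] [IsTopologicalGroup G]
    [TopologicalSpace Y] [MulAction G Y] [ContinuousSMul G Y]
    {K : Set G} (hK : IsCompact K) {S : Set (Y × Y)} (hS : IsClosed S) :
    IsClosed (Set.image2 (fun (g : G) (p : Y × Y) => (p.1, g⁻¹ • p.2)) K S) := by
  set T := Set.image2 (fun (g : G) (p : Y × Y) => (p.1, g⁻¹ • p.2)) K S with hT
  have hmem : ∀ x ∈ T, ∃ g ∈ K, (x.1, g • x.2) ∈ S := by
    rintro x ⟨g, hgK, p, hpS, rfl⟩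
    exact ⟨g, hgK, by simpa using hpS⟩
  choose! f hf using hmem
  refine isClosed_of_closure_subset (fun x hx ↦ ?_)
  rcases mem_closure_iff_ultrafilter.mp hx with ⟨u, huT, hux⟩
  have hfu : Ultrafilter.map f u ≤ Filter.principal K := by
    calc Ultrafilter.map f u ≤ Filter.map f (Filter.principal T) :=
          Filter.map_mono (Filter.le_principal_iff.mpr huT)
      _ = Filter.principal (f '' T) := Filter.map_principal
      _ ≤ Filter.principal K :=
          Filter.principal_mono.mpr (Set.image_subset_iff.mpr (fun y hy ↦ (hf y hy).1))
  rcases hK.ultrafilter_le_nhds (Ultrafilter.map f u) hfu with ⟨g, hgK, hug⟩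
  have hlim : Filter.Tendsto (fun p : Y × Y => (p.1, f p • p.2)) u (nhds (x.1, g • x.2)) := by
    refine Filter.Tendsto.prodMk_nhds ?_ ?_
    · exact (continuous_fst.tendsto x).comp hux
    · exact Filter.Tendsto.smul hug ((continuous_snd.tendsto x).comp hux)
  have hSmem : (x.1, g • x.2) ∈ S := by
    refine hS.mem_of_tendsto hlim ?_
    exact Filter.eventually_iff_exists_mem.mpr ⟨T, huT, fun p hp => (hf p hp).2⟩
  exact ⟨g, hgK, (x.1, g • x.2), hSmem, by simp⟩

/-- If `H` is a normal subgroup of `G`, `K ⊆ G` is compact with `K · H = G`, and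
`R_H = {(x,y) : y ∈ closure (H·x)}` is closed, then `R_G = K · R_H` under the
action `g • (x,y) = (x, g⁻¹ • y)` of `G` on `Y × Y`, and hence `R_G` is closed. -/
theorem stmt7 {G Y : Type*} [Group G] [TopologicalSpace G] [IsTopologicalGroup G]
    [TopologicalSpace Y] [MulAction G Y] [ContinuousSMul G Y]
    (H : Subgroup G) [H.Normal] (K : Set G) (hK : IsCompact K)
    (hsyn : K * (H : Set G) = Set.univ)
    (hH : IsClosed {p : Y × Y | p.2 ∈ closure (MulAction.orbit H p.1)}) :
    {p : Y × Y | p.2 ∈ closure (MulAction.orbit G p.1)}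
      = Set.image2 (fun (g : G) (p : Y × Y) => (p.1, g⁻¹ • p.2)) K
          {p : Y × Y | p.2 ∈ closure (MulAction.orbit H p.1)} ∧
    IsClosed {p : Y × Y | p.2 ∈ closure (MulAction.orbit G p.1)} := by
  have key : ∀ x : Y, closure (MulAction.orbit G x)
      = K⁻¹ • closure (MulAction.orbit H x) := by
    intro x
    have hTclosed : IsClosed (K⁻¹ • closure (MulAction.orbit H x)) :=
      isClosed_closure.smul_left_of_isCompact hK.inv
    apply le_antisymm
    · apply closure_minimal ?_ hTclosed
      rintro _ ⟨g, rfl⟩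
      have : g⁻¹ ∈ K * (H : Set G) := by rw [hsyn]; trivial
      rcases this with ⟨k, hkK, h, hhH, hkh⟩
      have hg : g = h⁻¹ * k⁻¹ := by
        have : g⁻¹ = k * h := hkh.symm
        rw [← inv_inv g, this, mul_inv_rev]
      have hconj : k * h⁻¹ * k⁻¹ ∈ H :=
        Subgroup.Normal.conj_mem ‹H.Normal› h⁻¹ (inv_mem hhH) k
      refine ⟨k⁻¹, Set.inv_mem_inv.mpr hkK, (k * h⁻¹ * k⁻¹) • x, ?_, ?_⟩
      · exact subset_closure ⟨⟨k * h⁻¹ * k⁻¹, hconj⟩, rfl⟩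
      · have hrw : h⁻¹ * k⁻¹ = k⁻¹ * (k * h⁻¹ * k⁻¹) := by group
        rw [hg, hrw]; simp only [mul_smul]
    · rintro _ ⟨k', hk', y, hy, rfl⟩
      have hsub : k' • closure (MulAction.orbit H x) ⊆ closure (MulAction.orbit G x) := by
        calc k' • closure (MulAction.orbit H x)
            ⊆ closure (k' • MulAction.orbit H x) := smul_closure_subset k' _
          _ ⊆ closure (MulAction.orbit G x) := by
              apply closure_mono
              rintro _ ⟨_, ⟨⟨h, hh⟩, rfl⟩, rfl⟩
              exact ⟨k' * h, by simp [mul_smul]⟩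
      exact hsub ⟨y, hy, rfl⟩
  have heq : {p : Y × Y | p.2 ∈ closure (MulAction.orbit G p.1)}
      = Set.image2 (fun (g : G) (p : Y × Y) => (p.1, g⁻¹ • p.2)) K
          {p : Y × Y | p.2 ∈ closure (MulAction.orbit H p.1)} := by
    ext ⟨x, y⟩
    simp only [Set.mem_setOf_eq, key x]
    constructor
    · rintro ⟨k', hk', z, hz, rfl⟩
      rcases Set.mem_inv.mp hk' with hk''
      exact ⟨k'⁻¹, by simpa using hk', (x, z), hz, by simp⟩
    · rintro ⟨k, hkK, ⟨x', z⟩, hz, heq⟩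
      simp only [Prod.mk.injEq] at heq
      obtain ⟨rfl, rfl⟩ := heq
      exact ⟨k⁻¹, Set.inv_mem_inv.mpr hkK, z, hz, rfl⟩
  exact ⟨heq, heq ▸ aux_closed hK hH⟩
end

section
/- Let G be a topological group acting continuously on a topological space X, H a subgroup, and K a compact subset of G with K·H = G. Then for every x ∈ X, K · closure(H·x) is a closed set containing G·x, and consequently closure(G·x) = K · closure(H·x). -/
open Set MulAction Pointwise

/-- If `K ⊆ G` is compact with `K · H = G`, then for every `x`,
`K · closure (H·x)` is a closed set containing `G·x`, and consequently
`closure (G·x) = K · closure (H·x)`. -/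
theorem stmt8 {G X : Type*} [Group G] [TopologicalSpace G] [IsTopologicalGroup G]
    [TopologicalSpace X] [MulAction G X] [ContinuousSMul G X]
    (H : Subgroup G) (K : Set G) (hK : IsCompact K)
    (hsyn : K * (H : Set G) = Set.univ) :
    ∀ x : X,
      IsClosed (Set.image2 (fun (k : G) (y : X) => k • y) K
        (closure (MulAction.orbit H x))) ∧
      MulAction.orbit G x ⊆ Set.image2 (fun (k : G) (y : X) => k • y) K
        (closure (MulAction.orbit H x)) ∧
      closure (MulAction.orbit G x)
        = Set.image2 (fun (k : G) (y : X) => k • y) K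
            (closure (MulAction.orbit H x)) := by
  intro x
  have himg : Set.image2 (fun (k : G) (y : X) => k • y) K (closure (orbit H x))
      = K • (closure (orbit H x)) := rfl
  have hclosed : IsClosed (Set.image2 (fun (k : G) (y : X) => k • y) K
      (closure (orbit H x))) := by
    rw [himg]
    exact isClosed_closure.smul_left_of_isCompact hK
  have hsub : orbit G x ⊆ Set.image2 (fun (k : G) (y : X) => k • y) K
      (closure (orbit H x)) := by
    rintro _ ⟨g, rfl⟩
    have : g ∈ K * (H : Set G) := hsyn ▸ Set.mem_univ g
    obtain ⟨k, hk, h, hh, rfl⟩ := this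
    simp only [mul_smul]
    exact Set.mem_image2_of_mem hk (subset_closure ⟨⟨h, hh⟩, rfl⟩)
  refine ⟨hclosed, hsub, le_antisymm (closure_minimal hsub hclosed) ?_⟩
  rintro _ ⟨k, hk, y, hy, rfl⟩
  have h1 : (fun y : X => k • y) '' closure (orbit H x) ⊆ closure (orbit G x) := by
    refine Set.image_subset_iff.mpr (closure_minimal ?_ ?_)
    · rintro z ⟨⟨h, hh⟩, rfl⟩
      exact subset_closure ⟨k * h, by simp only [mul_smul]; rfl⟩
    · exact isClosed_closure.preimage (continuous_const_smul k)
  exact h1 ⟨y, hy, rfl⟩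
end

section
/- Let F be an R-closed decomposition of a compact metrizable space X and let F̂ denote the decomposition of closures. Then the quotient space X/F̂ is compact, Hausdorff, and metrizable. -/
open Set Topology

/-- The relation whose classes are the closures of elements of `F`; its `Quot`
is the quotient space `X/F̂`. -/
def hatRel {X : Type*} [TopologicalSpace X] (F : Set (Set X)) (x y : X) : Prop :=
  ∃ A ∈ F, x ∈ closure A ∧ y ∈ closure A

theorem stmt12 {X : Type*} [TopologicalSpace X] [TopologicalSpace.MetrizableSpace X]
    [CompactSpace X] (F : Set (Set X)) (hF : IsDecomposition F) (hR : RClosed F) :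
    CompactSpace (Quot (hatRel F)) ∧ T2Space (Quot (hatRel F)) ∧
      TopologicalSpace.MetrizableSpace (Quot (hatRel F)) := by
  classical
  obtain ⟨hne, hdisj, hcov⟩ := hF
  set S : Set (X × X) := {p : X × X | ∃ A ∈ F, p.1 ∈ A ∧ p.2 ∈ closure A} with hS
  have hmem : ∀ x : X, ∃ A ∈ F, x ∈ A := by
    intro x
    have : x ∈ ⋃₀ F := hcov ▸ Set.mem_univ x
    simpa using this
  -- key lemma
  have key : ∀ A ∈ F, ∀ x ∈ closure A, ∀ y ∈ closure A,
      ∃ C ∈ F, x ∈ C ∧ y ∈ closure C := by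
    intro A hA x hx y hy
    have hsub : A ×ˢ ({y} : Set X) ⊆ S := by
      rintro ⟨a, b⟩ ⟨ha, hb⟩
      have hb' : b = y := hb
      exact ⟨A, hA, ha, hb' ▸ hy⟩
    have hmemcl : (x, y) ∈ closure (A ×ˢ ({y} : Set X)) := by
      rw [closure_prod_eq]
      exact ⟨hx, subset_closure rfl⟩
    exact hR.closure_subset ((closure_mono hsub) hmemcl)
  -- hatRel is an equivalence relation
  have hequiv : Equivalence (hatRel F) := by
    constructor
    · intro x
      obtain ⟨A, hA, hx⟩ := hmem x
      exact ⟨A, hA, subset_closure hx, subset_closure hx⟩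
    · rintro x y ⟨A, hA, hx, hy⟩
      exact ⟨A, hA, hy, hx⟩
    · rintro x y z ⟨A, hA, hxA, hyA⟩ ⟨B, hB, hyB, hzB⟩
      obtain ⟨C₁, hC₁, hyC₁, hxC₁⟩ := key A hA y hyA x hxA
      obtain ⟨C₂, hC₂, hyC₂, hzC₂⟩ := key B hB y hyB z hzB
      have hCeq : C₁ = C₂ := by
        by_contra hne'
        exact (hdisj C₁ hC₁ C₂ hC₂ hne').le_bot ⟨hyC₁, hyC₂⟩ |>.elim
      exact ⟨C₁, hC₁, hxC₁, hCeq ▸ hzC₂⟩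
  -- the relation set is closed
  have hRel_eq : {p : X × X | hatRel F p.1 p.2} = S := by
    ext ⟨x, y⟩
    constructor
    · rintro ⟨A, hA, hx, hy⟩
      exact key A hA x hx y hy
    · rintro ⟨A, hA, hx, hy⟩
      exact ⟨A, hA, subset_closure hx, hy⟩
  have hRel_closed : IsClosed {p : X × X | hatRel F p.1 p.2} := hRel_eq ▸ hR
  set q : X → Quot (hatRel F) := Quot.mk (hatRel F) with hq_def
  have hq : Topology.IsQuotientMap q := isQuotientMap_quot_mk
  have hqsurj : Function.Surjective q := Quot.exists_rep
  have hq_eq : ∀ x y : X, q x = q y ↔ hatRel F x y := by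
    intro x y
    rw [hq_def, Quot.eq, hequiv.eqvGen_iff]
  -- saturation of a closed set is closed
  have hsat_closed : ∀ C : Set X, IsClosed C → IsClosed (q ⁻¹' (q '' C)) := by
    intro C hC
    have : q ⁻¹' (q '' C) =
        Prod.fst '' ({p : X × X | hatRel F p.1 p.2} ∩ Set.univ ×ˢ C) := by
      ext x
      constructor
      · rintro ⟨c, hc, hqc⟩
        exact ⟨(x, c), ⟨(hq_eq x c).mp hqc.symm, ⟨Set.mem_univ _, hc⟩⟩, rfl⟩
      · rintro ⟨⟨a, b⟩, ⟨hrel, ⟨-, hb⟩⟩, rfl⟩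
        exact ⟨b, hb, ((hq_eq a b).mpr hrel).symm⟩
    rw [this]
    exact isClosedMap_fst_of_compactSpace _
      (hRel_closed.inter (isClosed_univ.prod hC))
  have hclosedmap : IsClosedMap q := by
    intro C hC
    rw [← hq.isClosed_preimage]
    exact hsat_closed C hC
  -- fibers are closed
  have hfiber_closed : ∀ x : X, IsClosed (q ⁻¹' {q x}) := by
    intro x
    have : q ⁻¹' {q x} = (fun z : X => (z, x)) ⁻¹' {p : X × X | hatRel F p.1 p.2} := by
      ext z
      simp only [Set.mem_preimage, Set.mem_singleton_iff, Set.mem_setOf_eq]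
      exact hq_eq z x
    rw [this]
    exact hRel_closed.preimage (Continuous.prodMk continuous_id continuous_const)
  -- T1
  haveI hT1 : T1Space (Quot (hatRel F)) := by
    constructor
    intro y
    obtain ⟨x, rfl⟩ := hqsurj y
    rw [← hq.isClosed_preimage]
    exact hfiber_closed x
  -- X is normal and second countable (it is compact metrizable)
  haveI : NormalSpace X := by
    letI := TopologicalSpace.metrizableSpaceMetric X
    infer_instance
  haveI : SecondCountableTopology X := by
    letI := TopologicalSpace.metrizableSpaceMetric X
    infer_instance
  -- Normal
  haveI hNormal : NormalSpace (Quot (hatRel F)) := by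
    constructor
    intro s t hs ht hst
    obtain ⟨U, V, hU, hV, hsU, htV, hUV⟩ :=
      normal_separation (hs.preimage hq.continuous)
        (ht.preimage hq.continuous)
        (hst.preimage q)
    refine ⟨(q '' Uᶜ)ᶜ, (q '' Vᶜ)ᶜ, (hclosedmap _ hU.isClosed_compl).isOpen_compl,
      (hclosedmap _ hV.isClosed_compl).isOpen_compl, ?_, ?_, ?_⟩
    · intro y hy
      rintro ⟨x, hxU, rfl⟩
      exact hxU (hsU hy)
    · intro y hy
      rintro ⟨x, hxV, rfl⟩
      exact hxV (htV hy)
    · rw [Set.disjoint_left]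
      rintro y hyU hyV
      obtain ⟨x, rfl⟩ := hqsurj y
      rcases (em (x ∈ U)) with hxU | hxU
      · rcases (em (x ∈ V)) with hxV | hxV
        · exact hUV.le_bot ⟨hxU, hxV⟩
        · exact hyV ⟨x, hxV, rfl⟩
      · exact hyU ⟨x, hxU, rfl⟩
  haveI hT4 : T4Space (Quot (hatRel F)) := ⟨⟩
  -- Second countable
  haveI hSC : SecondCountableTopology (Quot (hatRel F)) := by
    set 𝒞 : Set (Set X) := TopologicalSpace.countableBasis X with h𝒞
    set 𝔅 : Set (Set (Quot (hatRel F))) :=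
      (fun s : Set (Set X) => (q '' (⋃₀ s)ᶜ)ᶜ) '' {s | s.Finite ∧ s ⊆ 𝒞} with h𝔅
    have hcount : 𝔅.Countable :=
      (Set.countable_setOf_finite_subset
        (TopologicalSpace.countable_countableBasis X)).image _
    have hbasis : TopologicalSpace.IsTopologicalBasis 𝔅 := by
      apply TopologicalSpace.isTopologicalBasis_of_isOpen_of_nhds
      · rintro u ⟨s, ⟨-, hs𝒞⟩, rfl⟩
        have hopen : IsOpen (⋃₀ s) :=
          isOpen_sUnion fun b hb =>
            TopologicalSpace.isOpen_of_mem_countableBasis (hs𝒞 hb)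
        exact (hclosedmap _ hopen.isClosed_compl).isOpen_compl
      · intro y W hyW hW
        obtain ⟨x, rfl⟩ := hqsurj y
        have hfibcpt : IsCompact (q ⁻¹' {q x}) := (hfiber_closed x).isCompact
        have hfibsub : q ⁻¹' {q x} ⊆ q ⁻¹' W := fun z hz => by
          rw [Set.mem_preimage] at hz ⊢
          exact hz ▸ hyW
        -- cover the fiber by basis elements inside q ⁻¹' W
        set ι := {b : Set X // b ∈ 𝒞 ∧ b ⊆ q ⁻¹' W}
        have hcover : q ⁻¹' {q x} ⊆ ⋃ i : ι, (i : Set X) := by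
          intro z hz
          obtain ⟨b, hb𝒞, hzb, hbsub⟩ :=
            (TopologicalSpace.isBasis_countableBasis X).exists_subset_of_mem_open
              (hfibsub hz) (hW.preimage hq.continuous)
          exact Set.mem_iUnion.mpr ⟨⟨b, hb𝒞, hbsub⟩, hzb⟩
        obtain ⟨t, ht⟩ := hfibcpt.elim_finite_subcover (fun i : ι => (i : Set X))
          (fun i => TopologicalSpace.isOpen_of_mem_countableBasis i.2.1) hcover
        set s : Set (Set X) := Subtype.val '' (↑t : Set ι) with hs_def
        have hsfin : s.Finite := (t.finite_toSet).image _
        have hs𝒞 : s ⊆ 𝒞 := by rintro b ⟨i, -, rfl⟩; exact i.2.1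
        have hsUsub : ⋃₀ s ⊆ q ⁻¹' W := by
          rintro z ⟨b, ⟨i, -, rfl⟩, hzb⟩
          exact i.2.2 hzb
        have hfib_s : q ⁻¹' {q x} ⊆ ⋃₀ s := by
          intro z hz
          obtain ⟨i, hit, hzi⟩ := Set.mem_iUnion₂.mp (ht hz)
          exact ⟨(i : Set X), ⟨i, hit, rfl⟩, hzi⟩
        refine ⟨(q '' (⋃₀ s)ᶜ)ᶜ, ⟨s, ⟨hsfin, hs𝒞⟩, rfl⟩, ?_, ?_⟩
        · rintro ⟨z, hzs, hzq⟩
          exact hzs (hfib_s (by simp [hzq.symm]))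
        · intro w hw
          obtain ⟨z, rfl⟩ := hqsurj w
          by_cases hzs : z ∈ ⋃₀ s
          · exact hsUsub hzs
          · exact absurd ⟨z, hzs, rfl⟩ hw
    exact hbasis.secondCountableTopology hcount
  exact ⟨inferInstance, inferInstance, inferInstance⟩
end
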